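/- Let Γ be a finite group, R a braided Hopf algebra in ^Γ_Γ𝒴𝒟, A = R#kΓ, and 𝒟 ⊆ A^e the subalgebra generated by the elements (r#g)⊗(s#g⁻¹) with r,s ∈ R, g ∈ Γ. Then Hom_{R^e}(𝒟, R^e) ≅ 𝒟 as A-R^e-bimodules, where the left A-module structure on 𝒟 comes from the embedding ρ(a) = a₁⊗S_A(a₂) into A^e, and the A-R^e-bimodule structure on Hom_{R^e}(𝒟, R^e) is induced from the right A-module structure of 𝒟 and the right R^e-module structure of R^e. -/

import Mathlib

set_option synthInstance.maxHeartbeats 1000000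
set_option maxHeartbeats 1600000
open scoped TensorProduct
open TensorProduct

noncomputable section

/-- `IsRepr k x a b` says that `∑ i, a i ⊗ b i` is a representation of the element `x`
of a tensor product as a finite sum of pure tensors. -/
def IsRepr (k : Type) [CommRing k] {M N : Type} [AddCommGroup M] [Module k M]
    [AddCommGroup N] [Module k N] (x : M ⊗[k] N) {n : ℕ}
    (a : Fin n → M) (b : Fin n → N) : Prop :=
  x = ∑ i, a i ⊗ₜ[k] b i

end
open scoped TensorProduct
open TensorProduct

noncomputable section

variable (k Γ R : Type) [Field k] [Group Γ] [Fintype Γ] [DecidableEq Γ]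
  [Ring R] [Algebra k R]

/-- A braided Hopf algebra `R` in the Yetter-Drinfeld category `{}^Γ_Γ\mathcal{YD}` over
the group algebra of a finite group `Γ`: a `Γ`-graded algebra (`proj g` is the projection
onto the homogeneous component `R_g`) carrying a `Γ`-action by algebra automorphisms with
`h ⋅ R_g = R_{hgh⁻¹}`, together with a comultiplication, counit and antipode making it a
braided Hopf algebra, the braiding being `c(x ⊗ y) = (g ⋅ y) ⊗ x` for `x ∈ R_g`. -/
structure GammaBraidedHopf : Type where
  /-- the `Γ`-action by algebra automorphisms -/
  act : Γ →* (R ≃ₐ[k] R)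
  /-- the projection onto the degree `g` homogeneous component -/
  proj : Γ → (R →ₗ[k] R)
  proj_sum : ∀ r : R, ∑ g : Γ, proj g r = r
  proj_proj : ∀ (g h : Γ) (r : R), proj g (proj h r) = if g = h then proj h r else 0
  /-- the grading is an algebra grading: `R_g R_h ⊆ R_{gh}` -/
  proj_mul : ∀ (g h : Γ) (r s : R), proj g r = r → proj h s = s →
    proj (g * h) (r * s) = r * s
  proj_one_one : proj 1 1 = 1
  /-- compatibility of action and grading: `h ⋅ R_g = R_{hgh⁻¹}` -/
  act_proj : ∀ (h g : Γ) (r : R), proj g r = r →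
    proj (h * g * h⁻¹) (act h r) = act h r
  /-- the comultiplication of `R` -/
  comulR : R →ₗ[k] R ⊗[k] R
  /-- the counit of `R` -/
  counitR : R →ₗ[k] k
  comulR_coassoc : ∀ (r : R) {n : ℕ} (r1 r2 : Fin n → R), IsRepr k (comulR r) r1 r2 →
      ∑ i, (TensorProduct.assoc k R R R) (comulR (r1 i) ⊗ₜ[k] r2 i)
        = ∑ i, r1 i ⊗ₜ[k] comulR (r2 i)
  comulR_counit_left : ∀ (r : R) {n : ℕ} (r1 r2 : Fin n → R), IsRepr k (comulR r) r1 r2 →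
      ∑ i, counitR (r1 i) • r2 i = r
  comulR_counit_right : ∀ (r : R) {n : ℕ} (r1 r2 : Fin n → R), IsRepr k (comulR r) r1 r2 →
      ∑ i, counitR (r2 i) • r1 i = r
  /-- `Δ_R` is an algebra map for the braided multiplication on `R ⊗ R`:
  `Δ_R(rs) = Σ_g (r¹ (g ⋅ s¹)) ⊗ ((r²)_g s²)` -/
  comulR_braided_mul : ∀ (r s : R) {n : ℕ} (r1 r2 : Fin n → R) {m : ℕ}
      (s1 s2 : Fin m → R),
    IsRepr k (comulR r) r1 r2 → IsRepr k (comulR s) s1 s2 →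
      comulR (r * s) = ∑ i, ∑ i', ∑ g : Γ,
        (r1 i * act g (s1 i')) ⊗ₜ[k] (proj g (r2 i) * s2 i')
  comulR_one : comulR 1 = 1 ⊗ₜ[k] 1
  counitR_mul : ∀ r s : R, counitR (r * s) = counitR r * counitR s
  counitR_one : counitR 1 = 1
  /-- the comultiplication is `Γ`-equivariant -/
  comulR_equivariant : ∀ (h : Γ) (r : R),
    comulR (act h r)
      = TensorProduct.map (act h).toLinearMap (act h).toLinearMap (comulR r)
  counitR_equivariant : ∀ (h : Γ) (r : R), counitR (act h r) = counitR r
  /-- the comultiplication is graded: `Δ_R(R_g) ⊆ ⊕_{st = g} R_s ⊗ R_t` -/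
  comulR_graded : ∀ (g : Γ) (r : R), proj g r = r → ∀ s t : Γ, s * t ≠ g →
    TensorProduct.map (proj s) (proj t) (comulR r) = 0
  counitR_graded : ∀ (g : Γ) (r : R), g ≠ 1 → counitR (proj g r) = 0
  /-- the antipode of `R` -/
  antipodeR : R →ₗ[k] R
  antipodeR_left : ∀ (r : R) {n : ℕ} (r1 r2 : Fin n → R), IsRepr k (comulR r) r1 r2 →
      ∑ i, antipodeR (r1 i) * r2 i = counitR r • (1 : R)
  antipodeR_right : ∀ (r : R) {n : ℕ} (r1 r2 : Fin n → R), IsRepr k (comulR r) r1 r2 →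
      ∑ i, r1 i * antipodeR (r2 i) = counitR r • (1 : R)

variable (A : Type) [Ring A] [HopfAlgebra k A]

/-- The Radford biproduct (bosonization) `A = R # kΓ` of a braided Hopf algebra `R` in
`{}^Γ_Γ\mathcal{YD}`: the Hopf algebra `A` is identified, via the `k`-linear isomorphism
`e`, with `R ⊗ kΓ`, in such a way that the multiplication, unit, comultiplication and
counit of `A` are the ones of the Radford biproduct. -/
structure GammaBosonization extends GammaBraidedHopf k Γ R : Type where
  /-- the identification of `A` with `R ⊗ kΓ`. -/
  e : R ⊗[k] MonoidAlgebra k Γ ≃ₗ[k] A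
  e_one : e (1 ⊗ₜ[k] MonoidAlgebra.single 1 1) = 1
  /-- `(r # g)(s # h) = r (g ⋅ s) # gh` -/
  e_mul : ∀ (r s : R) (g h : Γ),
    e (r ⊗ₜ[k] MonoidAlgebra.single g 1) * e (s ⊗ₜ[k] MonoidAlgebra.single h 1)
      = e ((r * act g s) ⊗ₜ[k] MonoidAlgebra.single (g * h) 1)
  e_counit : ∀ (r : R) (h : Γ),
    Coalgebra.counit (R := k) (e (r ⊗ₜ[k] MonoidAlgebra.single h 1)) = counitR r
  /-- `Δ_A(r # h) = Σ_g (r¹ # gh) ⊗ ((r²)_g # h)` -/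
  e_comul : ∀ (r : R) (h : Γ) {n : ℕ} (r1 r2 : Fin n → R), IsRepr k (comulR r) r1 r2 →
    Coalgebra.comul (R := k) (e (r ⊗ₜ[k] MonoidAlgebra.single h 1))
      = ∑ i, ∑ g : Γ, e (r1 i ⊗ₜ[k] MonoidAlgebra.single (g * h) 1)
          ⊗ₜ[k] e (proj g (r2 i) ⊗ₜ[k] MonoidAlgebra.single h 1)

end
noncomputable section

/-- The algebra embedding `ρ : A → A^e`, `ρ(a) = a₁ ⊗ S_A(a₂)`, of a Hopf algebra into
its enveloping algebra (here given as a `k`-linear map). -/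
def hopfRho (k A : Type) [Field k] [Ring A] [HopfAlgebra k A] : A →ₗ[k] A ⊗[k] Aᵐᵒᵖ :=
  (TensorProduct.map LinearMap.id
      ((MulOpposite.opLinearEquiv k).toLinearMap ∘ₗ HopfAlgebra.antipode (R := k))) ∘ₗ
    Coalgebra.comul (R := k)

end
noncomputable section

/-- The subalgebra `𝒟 ⊆ A^e` generated by the elements `(r # g) ⊗ (s # g⁻¹)`, for the
Radford biproduct `A = R # kΓ`. -/
def DSub (k Γ R A : Type) [Field k] [Group Γ] [Fintype Γ] [DecidableEq Γ]
    [Ring R] [Algebra k R] [Ring A] [HopfAlgebra k A]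
    (B : GammaBosonization k Γ R A) : Subalgebra k (A ⊗[k] Aᵐᵒᵖ) :=
  Algebra.adjoin k {x | ∃ (r s : R) (g : Γ),
    x = B.e (r ⊗ₜ[k] MonoidAlgebra.single g 1)
        ⊗ₜ[k] MulOpposite.op (B.e (s ⊗ₜ[k] MonoidAlgebra.single g⁻¹ 1))}

end
noncomputable section

/-- The embedding `R → A = R # kΓ`, `r ↦ r # 1`. -/
def iotaR (k Γ R A : Type) [Field k] [Group Γ] [Fintype Γ] [DecidableEq Γ]
    [Ring R] [Algebra k R] [Ring A] [HopfAlgebra k A]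
    (B : GammaBosonization k Γ R A) : R →ₗ[k] A :=
  B.e.toLinearMap ∘ₗ
    ((TensorProduct.mk k R (MonoidAlgebra k Γ)).flip (MonoidAlgebra.single 1 1))

end
noncomputable section

/-- The induced embedding `R^e → A^e`. -/
def embRe (k Γ R A : Type) [Field k] [Group Γ] [Fintype Γ] [DecidableEq Γ]
    [Ring R] [Algebra k R] [Ring A] [HopfAlgebra k A]
    (B : GammaBosonization k Γ R A) : R ⊗[k] Rᵐᵒᵖ →ₗ[k] A ⊗[k] Aᵐᵒᵖ :=
  TensorProduct.map (iotaR k Γ R A B)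
    ((MulOpposite.opLinearEquiv k).toLinearMap ∘ₗ iotaR k Γ R A B ∘ₗ
      (MulOpposite.opLinearEquiv k).symm.toLinearMap)

/-- The property, for a map `F : 𝒟 → R^e`, of being left `R^e`-linear (where `R^e` acts
on `𝒟` through the embedding `R^e → A^e` and left multiplication). -/
def IsReLinear (k Γ R A : Type) [Field k] [Group Γ] [Fintype Γ] [DecidableEq Γ]
    [Ring R] [Algebra k R] [Ring A] [HopfAlgebra k A]
    (B : GammaBosonization k Γ R A)
    (F : ↥(DSub k Γ R A B) →ₗ[k] (R ⊗[k] Rᵐᵒᵖ)) : Prop :=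
  ∀ (z : R ⊗[k] Rᵐᵒᵖ) (x y : ↥(DSub k Γ R A B)),
    (y : A ⊗[k] Aᵐᵒᵖ) = embRe k Γ R A B z * (x : A ⊗[k] Aᵐᵒᵖ) → F y = z * F x

end
section Aux

open scoped TensorProduct
open TensorProduct MulOpposite

variable {k Γ R A : Type} [Field k] [Group Γ] [Fintype Γ] [DecidableEq Γ]
  [Ring R] [Algebra k R] [Ring A] [HopfAlgebra k A] (B : GammaBosonization k Γ R A)

noncomputable section

/-- abbreviation for `r # γ`. -/
def bE (r : R) (γ : Γ) : A := B.e (r ⊗ₜ[k] MonoidAlgebra.single γ 1)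

lemma exists_isRepr {M N : Type} [AddCommGroup M] [Module k M] [AddCommGroup N]
    [Module k N] (x : M ⊗[k] N) : ∃ (n : ℕ) (a : Fin n → M) (b : Fin n → N),
      IsRepr k x a b := by
  obtain ⟨S, hS⟩ := TensorProduct.exists_finset x
  refine ⟨S.card, fun i => (S.equivFin.symm i).1.1, fun i => (S.equivFin.symm i).1.2, ?_⟩
  rw [IsRepr, hS, ← Finset.sum_coe_sort S (fun p => p.1 ⊗ₜ[k] p.2),
    ← Equiv.sum_comp S.equivFin.symm (fun p => (p : M × N).1 ⊗ₜ[k] (p : M × N).2)]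

lemma act_one (r : R) : B.act 1 r = r := by rw [map_one]; rfl

lemma act_act (γ δ : Γ) (r : R) : B.act γ (B.act δ r) = B.act (γ * δ) r := by
  rw [map_mul]; rfl

lemma bE_mul (r s : R) (γ δ : Γ) : bE B r γ * bE B s δ = bE B (r * B.act γ s) (γ * δ) :=
  B.e_mul r s γ δ

lemma bE_one : bE B 1 1 = 1 := B.e_one

/-- The embedding `R → A` as an algebra map. -/
def iotaA : R →ₐ[k] A :=
  AlgHom.ofLinearMap (iotaR k Γ R A B) B.e_one
    (fun r s => by
      have : ∀ t : R, iotaR k Γ R A B t = bE B t 1 := fun t => rfl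
      rw [this, this, this, bE_mul, act_one, one_mul])

lemma iotaA_apply (r : R) : iotaA B r = bE B r 1 := rfl

/-- group-like elements `u_γ = (1 # γ) ⊗ (1 # γ⁻¹)ᵒᵖ`. -/
def uD (γ : Γ) : A ⊗[k] Aᵐᵒᵖ := bE B 1 γ ⊗ₜ[k] op (bE B 1 γ⁻¹)

/-- The embedding `R^e → A^e` as an algebra map. -/
def embA : R ⊗[k] Rᵐᵒᵖ →ₐ[k] A ⊗[k] Aᵐᵒᵖ :=
  Algebra.TensorProduct.map (iotaA B) (AlgHom.op (iotaA B))

lemma embA_tmul (r : R) (m : Rᵐᵒᵖ) :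
    embA B (r ⊗ₜ[k] m) = bE B r 1 ⊗ₜ[k] op (bE B (unop m) 1) := rfl

lemma embRe_eq_embA (z : R ⊗[k] Rᵐᵒᵖ) : embRe k Γ R A B z = embA B z := by
  have : embRe k Γ R A B = (embA B).toLinearMap := by
    apply TensorProduct.ext'
    intro r m
    rfl
  rw [this]; rfl

/-- The `Γ`-action on `R^e`. -/
def alE (γ : Γ) : R ⊗[k] Rᵐᵒᵖ ≃ₐ[k] R ⊗[k] Rᵐᵒᵖ :=
  Algebra.TensorProduct.congr (B.act γ) (AlgEquiv.op (B.act γ))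

lemma alE_tmul (γ : Γ) (r : R) (m : Rᵐᵒᵖ) :
    alE B γ (r ⊗ₜ[k] m) = B.act γ r ⊗ₜ[k] op (B.act γ (unop m)) := rfl

lemma alE_alE (γ δ : Γ) (z : R ⊗[k] Rᵐᵒᵖ) :
    alE B γ (alE B δ z) = alE B (γ * δ) z := by
  induction z using TensorProduct.induction_on with
  | zero => simp
  | tmul r m => rw [alE_tmul, alE_tmul, alE_tmul, act_act, unop_op, act_act]
  | add x y hx hy => rw [map_add, map_add, map_add, hx, hy]

lemma alE_one (z : R ⊗[k] Rᵐᵒᵖ) : alE B 1 z = z := by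
  induction z using TensorProduct.induction_on with
  | zero => simp
  | tmul r m => rw [alE_tmul, act_one, act_one, op_unop]
  | add x y hx hy => rw [map_add, hx, hy]

end
end Aux
section Aux2
open scoped TensorProduct
open TensorProduct MulOpposite

variable {k Γ R A : Type} [Field k] [Group Γ] [Fintype Γ] [DecidableEq Γ]
  [Ring R] [Algebra k R] [Ring A] [HopfAlgebra k A] (B : GammaBosonization k Γ R A)

noncomputable section

/-- extraction of the degree-`γ` coordinate of `A`. -/
def coA (γ : Γ) : A →ₗ[k] R :=
  (TensorProduct.rid k R).toLinearMap ∘ₗ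
    (TensorProduct.map LinearMap.id (Finsupp.lapply γ ∘ₗ
      (MonoidAlgebra.coeffLinearEquiv k).toLinearMap)) ∘ₗ B.e.symm.toLinearMap

lemma coA_bE (γ : Γ) (r : R) (δ : Γ) :
    coA B γ (bE B r δ) = if γ = δ then r else 0 := by
  rw [coA, bE]
  simp only [LinearMap.coe_comp, LinearEquiv.coe_coe, Function.comp_apply]
  erw [LinearEquiv.symm_apply_apply]
  simp only [TensorProduct.map_tmul, LinearMap.id_coe, id_eq]
  have h : (Finsupp.lapply (M := k) (R := k) γ ∘ₗ
      (MonoidAlgebra.coeffLinearEquiv k).toLinearMap) (MonoidAlgebra.single δ 1)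
      = if γ = δ then (1:k) else 0 := by
    simp [Finsupp.lapply, MonoidAlgebra.coeff_single, Finsupp.single_apply, eq_comm,
      MonoidAlgebra.coeffLinearEquiv]
  erw [h]
  split_ifs <;> simp

/-- extraction of the degree-`(γ, γ⁻¹)` coordinate of `A^e`, with the `γ`-twist on the
second factor. -/
def coD (γ : Γ) : A ⊗[k] Aᵐᵒᵖ →ₗ[k] R ⊗[k] Rᵐᵒᵖ :=
  TensorProduct.map (coA B γ)
    ((opLinearEquiv k).toLinearMap ∘ₗ (B.act γ).toLinearMap ∘ₗ coA B γ⁻¹ ∘ₗ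
      (opLinearEquiv k).symm.toLinearMap)

lemma coD_tmul (γ : Γ) (a : A) (m : Aᵐᵒᵖ) :
    coD B γ (a ⊗ₜ[k] m) = coA B γ a ⊗ₜ[k] op (B.act γ (coA B γ⁻¹ (unop m))) := rfl

/-- the spanning set of `A`. -/
def setA : Set A := {x | ∃ (r : R) (γ : Γ), x = bE B r γ}

lemma monoidAlgebra_decomp (x : MonoidAlgebra k Γ) :
    x = ∑ γ : Γ, x.coeff γ • MonoidAlgebra.single γ 1 := by
  ext δ
  rw [MonoidAlgebra.coeff_sum, Finsupp.finset_sum_apply]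
  simp [MonoidAlgebra.smul_single', MonoidAlgebra.coeff_single, Finsupp.single_apply]

lemma spanA : Submodule.span k (setA B) = ⊤ := by
  rw [Submodule.eq_top_iff']
  intro a
  have ha : a = B.e (B.e.symm a) := (B.e.apply_symm_apply a).symm
  rw [ha]
  generalize (B.e.symm a) = ξ
  induction ξ using TensorProduct.induction_on with
  | zero => simp
  | tmul r x =>
      rw [monoidAlgebra_decomp x, tmul_sum, map_sum]
      refine Submodule.sum_mem _ (fun γ _ => ?_)
      rw [tmul_smul, map_smul]
      exact Submodule.smul_mem _ _ (Submodule.subset_span ⟨r, γ, rfl⟩)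
  | add x y hx hy =>
      rw [map_add]; exact Submodule.add_mem _ hx hy

/-- the spanning set of `A^e`. -/
def setAA : Set (A ⊗[k] Aᵐᵒᵖ) :=
  {x | ∃ (r s : R) (γ δ : Γ), x = bE B r γ ⊗ₜ[k] op (bE B s δ)}

lemma tmul_mem_spanAA (a b : A) : a ⊗ₜ[k] op b ∈ Submodule.span k (setAA B) := by
  have h1 : a ∈ Submodule.span k (setA B) := by rw [spanA]; trivial
  have h2 : b ∈ Submodule.span k (setA B) := by rw [spanA]; trivial
  induction h1 using Submodule.span_induction with
  | mem x hx =>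
      induction h2 using Submodule.span_induction with
      | mem y hy =>
          obtain ⟨r, γ, rfl⟩ := hx
          obtain ⟨s, δ, rfl⟩ := hy
          exact Submodule.subset_span ⟨r, s, γ, δ, rfl⟩
      | zero => rw [op_zero, tmul_zero]; exact Submodule.zero_mem _
      | add u v _ _ hu hv => rw [op_add, tmul_add]; exact Submodule.add_mem _ hu hv
      | smul c u _ hu => rw [op_smul, tmul_smul]; exact Submodule.smul_mem _ _ hu
  | zero => rw [zero_tmul]; exact Submodule.zero_mem _
  | add u v _ _ hu hv => rw [add_tmul]; exact Submodule.add_mem _ hu hv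
  | smul c u _ hu => rw [← smul_tmul']; exact Submodule.smul_mem _ _ hu

lemma spanAA : Submodule.span k (setAA B) = ⊤ := by
  rw [Submodule.eq_top_iff']
  intro y
  induction y using TensorProduct.induction_on with
  | zero => exact Submodule.zero_mem _
  | tmul a m => rw [← op_unop m]; exact tmul_mem_spanAA B a (unop m)
  | add x y hx hy => exact Submodule.add_mem _ hx hy

end
end Aux2
section Aux3
open scoped TensorProduct
open TensorProduct MulOpposite

variable {k Γ R A : Type} [Field k] [Group Γ] [Fintype Γ] [DecidableEq Γ]
  [Ring R] [Algebra k R] [Ring A] [HopfAlgebra k A] (B : GammaBosonization k Γ R A)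

noncomputable section

lemma uD_mul (γ δ : Γ) : uD B γ * uD B δ = uD B (γ * δ) := by
  rw [uD, uD, uD, Algebra.TensorProduct.tmul_mul_tmul, bE_mul, map_one, mul_one,
    ← op_mul, bE_mul, map_one, mul_one, ← mul_inv_rev]

lemma uD_one : uD B 1 = 1 := by
  rw [uD, inv_one, bE_one, Algebra.TensorProduct.one_def, op_one]

lemma embA_tmul_mul_uD (x y : R) (γ : Γ) :
    embA B (x ⊗ₜ[k] op y) * uD B γ
      = bE B x γ ⊗ₜ[k] op (bE B (B.act γ⁻¹ y) γ⁻¹) := by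
  rw [embA_tmul, uD, Algebra.TensorProduct.tmul_mul_tmul, unop_op, bE_mul, map_one,
    mul_one, one_mul, ← op_mul, bE_mul, one_mul, mul_one]

/-- the generators of `𝒟` in normal form. -/
lemma gen_eq (r s : R) (γ : Γ) :
    bE B r γ ⊗ₜ[k] op (bE B s γ⁻¹)
      = embA B (r ⊗ₜ[k] op (B.act γ s)) * uD B γ := by
  rw [embA_tmul_mul_uD, act_act, inv_mul_cancel, act_one]

lemma uD_mul_embA (γ : Γ) (z : R ⊗[k] Rᵐᵒᵖ) :
    uD B γ * embA B z = embA B (alE B γ z) * uD B γ := by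
  induction z using TensorProduct.induction_on with
  | zero => simp
  | tmul r m =>
      rw [alE_tmul, embA_tmul, embA_tmul, uD, Algebra.TensorProduct.tmul_mul_tmul,
        Algebra.TensorProduct.tmul_mul_tmul, unop_op, bE_mul, bE_mul, ← op_mul, ← op_mul,
        bE_mul, bE_mul, map_one, act_act, inv_mul_cancel, act_one]
      simp
  | add x y hx hy =>
      rw [map_add, map_add, mul_add, map_add, add_mul, hx, hy]

/-- normal form products. -/
lemma normal_mul (z w : R ⊗[k] Rᵐᵒᵖ) (γ δ : Γ) :
    (embA B z * uD B γ) * (embA B w * uD B δ)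
      = embA B (z * alE B γ w) * uD B (γ * δ) := by
  have : embA B z * uD B γ * (embA B w * uD B δ)
      = embA B z * (uD B γ * embA B w) * uD B δ := by
    rw [← mul_assoc, mul_assoc (embA B z)]
  rw [this, uD_mul_embA, ← mul_assoc, ← map_mul, mul_assoc, uD_mul]

/-- the main coordinate computation. -/
lemma coD_normal (γ δ : Γ) (z : R ⊗[k] Rᵐᵒᵖ) :
    coD B γ (embA B z * uD B δ) = if γ = δ then z else 0 := by
  induction z using TensorProduct.induction_on with
  | zero => simp
  | tmul r m =>
      rw [← op_unop m, embA_tmul_mul_uD, coD_tmul, unop_op, coA_bE, coA_bE]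
      simp only [inv_inj]
      split_ifs with h
      · subst h; rw [act_act, mul_inv_cancel, act_one, op_unop]
      · rw [map_zero, op_zero, tmul_zero]
  | add x y hx hy =>
      rw [map_add, add_mul, map_add, hx, hy]
      split_ifs <;> simp

end
end Aux3
section Aux4
open scoped TensorProduct
open TensorProduct MulOpposite

variable {k Γ R A : Type} [Field k] [Group Γ] [Fintype Γ] [DecidableEq Γ]
  [Ring R] [Algebra k R] [Ring A] [HopfAlgebra k A] (B : GammaBosonization k Γ R A)

noncomputable section

lemma coD_mulLeft_embA (γ : Γ) (z : R ⊗[k] Rᵐᵒᵖ) (y : A ⊗[k] Aᵐᵒᵖ) :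
    coD B γ (embA B z * y) = z * coD B γ y := by
  induction z using TensorProduct.induction_on with
  | zero => simp
  | add x x' hx hx' => rw [map_add, add_mul, map_add, add_mul, hx, hx']
  | tmul r m =>
      have hfg : (coD B γ) ∘ₗ (LinearMap.mulLeft k (embA B (r ⊗ₜ[k] m)))
          = (LinearMap.mulLeft k (r ⊗ₜ[k] m)) ∘ₗ coD B γ := by
        apply LinearMap.ext_on (spanAA B)
        rintro x ⟨t, t', ρ, ρ', rfl⟩
        simp only [LinearMap.coe_comp, Function.comp_apply, LinearMap.mulLeft_apply]
        rw [← op_unop m]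
        simp only [embA_tmul, unop_op, Algebra.TensorProduct.tmul_mul_tmul, ← op_mul,
          bE_mul, act_one, one_mul, mul_one, coD_tmul, unop_op, coA_bE]
        split_ifs with h1 h2 h2
        · subst h1; subst h2
          rw [map_mul, act_act, mul_inv_cancel, act_one]
        · simp [map_zero, zero_mul, tmul_zero]
        · simp [mul_zero, zero_tmul]
        · simp [mul_zero, zero_tmul]
      exact LinearMap.congr_fun hfg y

lemma coD_mulRight_embA (γ : Γ) (z : R ⊗[k] Rᵐᵒᵖ) (y : A ⊗[k] Aᵐᵒᵖ) :
    coD B γ (y * embA B z) = coD B γ y * alE B γ z := by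
  induction z using TensorProduct.induction_on with
  | zero => simp
  | add x x' hx hx' => rw [map_add, mul_add, map_add, map_add, mul_add, hx, hx']
  | tmul r m =>
      have hfg : (coD B γ) ∘ₗ (LinearMap.mulRight k (embA B (r ⊗ₜ[k] m)))
          = (LinearMap.mulRight k (alE B γ (r ⊗ₜ[k] m))) ∘ₗ coD B γ := by
        apply LinearMap.ext_on (spanAA B)
        rintro x ⟨t, t', ρ, ρ', rfl⟩
        simp only [LinearMap.coe_comp, Function.comp_apply, LinearMap.mulRight_apply]
        rw [← op_unop m]
        simp only [embA_tmul, alE_tmul, unop_op, Algebra.TensorProduct.tmul_mul_tmul,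
          ← op_mul, bE_mul, act_one, one_mul, mul_one, coD_tmul, unop_op, coA_bE]
        split_ifs with h1 h2 h2
        · subst h1; subst h2
          rw [map_mul]
        · simp [map_zero, mul_zero, tmul_zero]
        · simp [zero_mul, zero_tmul]
        · simp [zero_mul, zero_tmul]
      exact LinearMap.congr_fun hfg y

lemma coD_mulLeft_uD (γ δ : Γ) (y : A ⊗[k] Aᵐᵒᵖ) :
    coD B γ (uD B δ * y) = alE B δ (coD B (δ⁻¹ * γ) y) := by
  have hfg : (coD B γ) ∘ₗ (LinearMap.mulLeft k (uD B δ))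
      = (alE B δ).toLinearMap ∘ₗ coD B (δ⁻¹ * γ) := by
    apply LinearMap.ext_on (spanAA B)
    rintro x ⟨t, t', ρ, ρ', rfl⟩
    simp only [LinearMap.coe_comp, Function.comp_apply, LinearMap.mulLeft_apply,
      AlgEquiv.toLinearMap_apply]
    simp only [uD, Algebra.TensorProduct.tmul_mul_tmul, ← op_mul, bE_mul, act_one,
      map_one, one_mul, mul_one, coD_tmul, unop_op, coA_bE, alE_tmul]
    have c1 : (δ⁻¹ * γ = ρ) ↔ (γ = δ * ρ) := by rw [inv_mul_eq_iff_eq_mul]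
    have c2 : ((δ⁻¹ * γ)⁻¹ = ρ') ↔ (γ⁻¹ = ρ' * δ⁻¹) := by
      rw [mul_inv_rev, inv_inv]; exact eq_mul_inv_iff_mul_eq.symm
    simp only [c1, c2]
    split_ifs with h1 h2 h2
    · rw [act_act, mul_inv_cancel_left]
    · simp [map_zero, tmul_zero]
    · simp [map_zero, zero_tmul]
    · simp [map_zero, zero_tmul]
  exact LinearMap.congr_fun hfg y

lemma coD_mulRight_uD (γ δ : Γ) (y : A ⊗[k] Aᵐᵒᵖ) :
    coD B γ (y * uD B δ) = coD B (γ * δ⁻¹) y := by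
  have hfg : (coD B γ) ∘ₗ (LinearMap.mulRight k (uD B δ)) = coD B (γ * δ⁻¹) := by
    apply LinearMap.ext_on (spanAA B)
    rintro x ⟨t, t', ρ, ρ', rfl⟩
    simp only [LinearMap.coe_comp, Function.comp_apply, LinearMap.mulRight_apply]
    simp only [uD, Algebra.TensorProduct.tmul_mul_tmul, ← op_mul, bE_mul, act_one,
      map_one, one_mul, mul_one, coD_tmul, unop_op, coA_bE]
    have c1 : (γ = ρ * δ) ↔ (γ * δ⁻¹ = ρ) := by rw [mul_inv_eq_iff_eq_mul]
    have c2 : (γ⁻¹ = δ⁻¹ * ρ') ↔ ((γ * δ⁻¹)⁻¹ = ρ') := by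
      rw [mul_inv_rev, inv_inv]; exact eq_inv_mul_iff_mul_eq
    simp only [c1, c2]
    split_ifs with h1 h2 h2
    · rw [act_act]
    · simp [map_zero, tmul_zero]
    · simp [zero_tmul]
    · simp [zero_tmul]
  exact LinearMap.congr_fun hfg y

end
end Aux4
section Aux5
open scoped TensorProduct
open TensorProduct MulOpposite

variable {k Γ R A : Type} [Field k] [Group Γ] [Fintype Γ] [DecidableEq Γ]
  [Ring R] [Algebra k R] [Ring A] [HopfAlgebra k A] (B : GammaBosonization k Γ R A)

noncomputable section

/-- the set of normal forms `emb(z) u_γ`. -/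
def setNF : Set (A ⊗[k] Aᵐᵒᵖ) := {x | ∃ (z : R ⊗[k] Rᵐᵒᵖ) (γ : Γ), x = embA B z * uD B γ}

lemma one_mem_setNF : (1 : A ⊗[k] Aᵐᵒᵖ) ∈ setNF B :=
  ⟨1, 1, by rw [map_one, uD_one, one_mul]⟩

lemma mul_mem_spanNF {x y : A ⊗[k] Aᵐᵒᵖ} (hx : x ∈ Submodule.span k (setNF B))
    (hy : y ∈ Submodule.span k (setNF B)) : x * y ∈ Submodule.span k (setNF B) := by
  induction hx using Submodule.span_induction with
  | mem u hu =>
      induction hy using Submodule.span_induction with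
      | mem v hv =>
          obtain ⟨z, γ, rfl⟩ := hu
          obtain ⟨w, δ, rfl⟩ := hv
          rw [normal_mul]
          exact Submodule.subset_span ⟨z * alE B γ w, γ * δ, rfl⟩
      | zero => rw [mul_zero]; exact Submodule.zero_mem _
      | add v v' _ _ hv hv' => rw [mul_add]; exact Submodule.add_mem _ hv hv'
      | smul c v _ hv => rw [mul_smul_comm]; exact Submodule.smul_mem _ _ hv
  | zero => rw [zero_mul]; exact Submodule.zero_mem _
  | add u u' _ _ hu hu' => rw [add_mul]; exact Submodule.add_mem _ hu hu'
  | smul c u _ hu => rw [smul_mul_assoc]; exact Submodule.smul_mem _ _ hu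

lemma DSub_le_spanNF {x : A ⊗[k] Aᵐᵒᵖ} (hx : x ∈ DSub k Γ R A B) :
    x ∈ Submodule.span k (setNF B) := by
  induction hx using Algebra.adjoin_induction with
  | mem u hu =>
      obtain ⟨r, s, γ, rfl⟩ := hu
      have : B.e (r ⊗ₜ[k] MonoidAlgebra.single γ 1)
          ⊗ₜ[k] op (B.e (s ⊗ₜ[k] MonoidAlgebra.single γ⁻¹ 1))
          = embA B (r ⊗ₜ[k] op (B.act γ s)) * uD B γ := gen_eq B r s γ
      rw [this]
      exact Submodule.subset_span ⟨_, _, rfl⟩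
  | algebraMap c =>
      have : algebraMap k (A ⊗[k] Aᵐᵒᵖ) c = c • 1 := Algebra.algebraMap_eq_smul_one c
      rw [this]
      exact Submodule.smul_mem _ _ (Submodule.subset_span (one_mem_setNF B))
  | add u v _ _ hu hv => exact Submodule.add_mem _ hu hv
  | mul u v _ _ hu hv => exact mul_mem_spanNF B hu hv

/-- reconstruction from coordinates. -/
lemma recon {x : A ⊗[k] Aᵐᵒᵖ} (hx : x ∈ Submodule.span k (setNF B)) :
    ∑ γ : Γ, embA B (coD B γ x) * uD B γ = x := by
  induction hx using Submodule.span_induction with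
  | mem u hu =>
      obtain ⟨z, δ, rfl⟩ := hu
      have h : ∀ γ : Γ, embA B (coD B γ (embA B z * uD B δ)) * uD B γ
          = if γ = δ then embA B z * uD B δ else 0 := by
        intro γ
        rw [coD_normal]
        split_ifs with h
        · rw [h]
        · rw [map_zero, zero_mul]
      rw [Finset.sum_congr rfl (fun γ _ => h γ), Finset.sum_ite_eq' Finset.univ δ
        (fun _ => embA B z * uD B δ)]
      simp
  | zero => simp
  | add u v _ _ hu hv =>
      simp only [map_add, add_mul]
      rw [Finset.sum_add_distrib, hu, hv]
  | smul c u _ hu =>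
      simp only [map_smul, smul_mul_assoc]
      rw [← Finset.smul_sum, hu]

lemma embA_mem_DSub (z : R ⊗[k] Rᵐᵒᵖ) : embA B z ∈ DSub k Γ R A B := by
  induction z using TensorProduct.induction_on with
  | zero => rw [map_zero]; exact Subalgebra.zero_mem _
  | tmul r m =>
      apply Algebra.subset_adjoin
      refine ⟨r, unop m, 1, ?_⟩
      rw [inv_one, embA_tmul]
      rfl
  | add u v hu hv => rw [map_add]; exact Subalgebra.add_mem _ hu hv

lemma uD_mem_DSub (γ : Γ) : uD B γ ∈ DSub k Γ R A B :=
  Algebra.subset_adjoin ⟨1, 1, γ, rfl⟩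

/-- left multiplication by an element of the span, on coordinates. -/
lemma coD_mul_left {d : A ⊗[k] Aᵐᵒᵖ} (hd : d ∈ Submodule.span k (setNF B))
    (y : A ⊗[k] Aᵐᵒᵖ) (γ : Γ) :
    coD B γ (d * y) = ∑ f : Γ, coD B f d * alE B f (coD B (f⁻¹ * γ) y) := by
  conv_lhs => rw [← recon B hd]
  rw [Finset.sum_mul, map_sum]
  refine Finset.sum_congr rfl (fun f _ => ?_)
  rw [mul_assoc, coD_mulLeft_embA, coD_mulLeft_uD]

/-- right multiplication by an element of the span, on coordinates. -/
lemma coD_mul_right {d : A ⊗[k] Aᵐᵒᵖ} (hd : d ∈ Submodule.span k (setNF B))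
    (y : A ⊗[k] Aᵐᵒᵖ) (γ : Γ) :
    coD B γ (y * d) = ∑ f : Γ, coD B (γ * f⁻¹) y * alE B (γ * f⁻¹) (coD B f d) := by
  conv_lhs => rw [← recon B hd]
  rw [Finset.mul_sum, map_sum]
  refine Finset.sum_congr rfl (fun f _ => ?_)
  rw [← mul_assoc, coD_mulRight_uD, coD_mulRight_embA]

end
end Aux5
section Aux6
open scoped TensorProduct
open TensorProduct MulOpposite

variable {k Γ R A : Type} [Field k] [Group Γ] [Fintype Γ] [DecidableEq Γ]
  [Ring R] [Algebra k R] [Ring A] [HopfAlgebra k A] (B : GammaBosonization k Γ R A)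

noncomputable section

lemma proj_proj_self (g : Γ) (r : R) : B.proj g (B.proj g r) = B.proj g r := by
  rw [B.proj_proj]; simp

lemma proj_decomp₂ (X : R ⊗[k] R) :
    ∑ f : Γ, ∑ g : Γ, TensorProduct.map (B.proj f) (B.proj g) X = X := by
  induction X using TensorProduct.induction_on with
  | zero => simp
  | tmul r s =>
      simp only [TensorProduct.map_tmul]
      rw [Finset.sum_congr rfl (fun f _ => (TensorProduct.tmul_sum _ _ _).symm)]
      rw [Finset.sum_congr rfl (fun f _ => by rw [B.proj_sum s])]
      rw [← TensorProduct.sum_tmul, B.proj_sum r]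
  | add u v hu hv =>
      simp only [map_add]
      rw [Finset.sum_congr rfl (fun f (_ : f ∈ Finset.univ) => Finset.sum_add_distrib),
        Finset.sum_add_distrib, hu, hv]

lemma comul_proj (c : Γ) (r : R) :
    ∑ f : Γ, TensorProduct.map (B.proj f) (B.proj (f⁻¹ * c)) (B.comulR r)
      = B.comulR (B.proj c r) := by
  have h1 : ∀ f : Γ, TensorProduct.map (B.proj f) (B.proj (f⁻¹ * c)) (B.comulR r)
      = TensorProduct.map (B.proj f) (B.proj (f⁻¹ * c)) (B.comulR (B.proj c r)) := by
    intro f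
    conv_lhs => rw [← B.proj_sum r]
    rw [map_sum, map_sum, Finset.sum_eq_single c]
    · intro d _ hd
      exact B.comulR_graded d (B.proj d r) (proj_proj_self B d r) f (f⁻¹ * c)
        (by rw [mul_inv_cancel_left]; exact fun h => hd h.symm)
    · intro h; exact absurd (Finset.mem_univ c) h
  rw [Finset.sum_congr rfl (fun f _ => h1 f)]
  have h2 : ∀ f : Γ, TensorProduct.map (B.proj f) (B.proj (f⁻¹ * c))
      (B.comulR (B.proj c r)) = ∑ g : Γ, TensorProduct.map (B.proj f) (B.proj g)
      (B.comulR (B.proj c r)) := by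
    intro f
    rw [Finset.sum_eq_single (f⁻¹ * c)]
    · intro g _ hg
      exact B.comulR_graded c (B.proj c r) (proj_proj_self B c r) f g
        (fun h => hg (by rw [← h, inv_mul_cancel_left]))
    · intro h; exact absurd (Finset.mem_univ _) h
  rw [Finset.sum_congr rfl (fun f _ => h2 f), proj_decomp₂]

lemma counitR_proj_one (r : R) : B.counitR (B.proj 1 r) = B.counitR r := by
  conv_rhs => rw [← B.proj_sum r]
  rw [map_sum, Finset.sum_eq_single 1]
  · intro c _ hc; exact B.counitR_graded c r hc
  · intro h; exact absurd (Finset.mem_univ _) h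

/-- candidate antipode, as a bilinear map on `R × kΓ`. -/
def TT0 : R →ₗ[k] MonoidAlgebra k Γ →ₗ[k] R ⊗[k] MonoidAlgebra k Γ :=
  LinearMap.mk₂ k
    (fun r x => ∑ δ : Γ, ∑ f : Γ, x.coeff δ •
      (B.act (δ⁻¹ * f⁻¹) (B.antipodeR (B.proj f r)) ⊗ₜ[k] MonoidAlgebra.single (δ⁻¹ * f⁻¹) 1))
    (fun r r' x => by
      simp only [map_add, add_tmul, smul_add, Finset.sum_add_distrib])
    (fun c r x => by
      simp only [map_smul, smul_tmul']
      rw [Finset.smul_sum]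
      refine Finset.sum_congr rfl (fun δ _ => ?_)
      rw [Finset.smul_sum]
      exact Finset.sum_congr rfl (fun f _ => by rw [smul_comm, smul_tmul']))
    (fun r x x' => by
      have h : ∀ δ : Γ, (x + x').coeff δ = x.coeff δ + x'.coeff δ := fun δ => rfl
      simp only [h, add_smul, Finset.sum_add_distrib])
    (fun c r x => by
      have h : ∀ δ : Γ, (c • x).coeff δ = c * x.coeff δ := fun δ => rfl
      simp only [h, mul_smul]
      rw [Finset.smul_sum]
      refine Finset.sum_congr rfl (fun δ _ => ?_)
      rw [Finset.smul_sum])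

/-- the candidate antipode of `A`. -/
def TT : A →ₗ[k] A :=
  B.e.toLinearMap ∘ₗ TensorProduct.lift (TT0 B) ∘ₗ B.e.symm.toLinearMap

lemma TT_bE (r : R) (δ : Γ) :
    TT B (bE B r δ)
      = ∑ f : Γ, bE B (B.act (δ⁻¹ * f⁻¹) (B.antipodeR (B.proj f r))) (δ⁻¹ * f⁻¹) := by
  rw [TT, bE]
  simp only [LinearMap.coe_comp, LinearEquiv.coe_coe, Function.comp_apply]
  erw [LinearEquiv.symm_apply_apply]
  rw [TensorProduct.lift.tmul]
  rw [TT0]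
  simp only [LinearMap.mk₂_apply]
  have hcollapse : (∑ δ' : Γ, ∑ f : Γ, (MonoidAlgebra.single δ (1:k)).coeff δ' •
        (B.act (δ'⁻¹ * f⁻¹) (B.antipodeR (B.proj f r)) ⊗ₜ[k]
          MonoidAlgebra.single (δ'⁻¹ * f⁻¹) (1:k)))
      = ∑ f : Γ, (B.act (δ⁻¹ * f⁻¹) (B.antipodeR (B.proj f r)) ⊗ₜ[k]
          MonoidAlgebra.single (δ⁻¹ * f⁻¹) (1:k)) := by
    rw [Finset.sum_eq_single δ]
    · exact Finset.sum_congr rfl (fun f _ => by rw [MonoidAlgebra.coeff_single, Finsupp.single_eq_same, one_smul])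
    · intro δ' _ hne
      refine Finset.sum_eq_zero (fun f _ => ?_)
      rw [MonoidAlgebra.coeff_single, Finsupp.single_apply, if_neg (fun h => hne h.symm), zero_smul]
    · intro h; exact absurd (Finset.mem_univ _) h
  rw [hcollapse, map_sum]
  rfl

end
end Aux6
section Aux7
open scoped TensorProduct
open TensorProduct MulOpposite

variable {k Γ R A : Type} [Field k] [Group Γ] [Fintype Γ] [DecidableEq Γ]
  [Ring R] [Algebra k R] [Ring A] [HopfAlgebra k A] (B : GammaBosonization k Γ R A)

noncomputable section

lemma e_eq_bE (r : R) (γ : Γ) :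
    B.e (r ⊗ₜ[k] MonoidAlgebra.single γ 1) = bE B r γ := rfl

lemma bE_sum {ι : Type} (s : Finset ι) (x : ι → R) (γ : Γ) :
    bE B (∑ j ∈ s, x j) γ = ∑ j ∈ s, bE B (x j) γ := by
  rw [bE, TensorProduct.sum_tmul, map_sum]
  rfl

lemma bE_smul (c : k) (r : R) (γ : Γ) : bE B (c • r) γ = c • bE B r γ := by
  rw [bE, ← TensorProduct.smul_tmul', map_smul]
  rfl

lemma Wc_eq (c : Γ) (r : R) {n : ℕ} (r1 r2 : Fin n → R)
    (h : IsRepr k (B.comulR r) r1 r2) :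
    ∑ f : Γ, ∑ i, B.antipodeR (B.proj f (r1 i)) * B.proj (f⁻¹ * c) (r2 i)
      = B.counitR (B.proj c r) • 1 := by
  obtain ⟨m, ρ1, ρ2, hrepr⟩ := exists_isRepr (k := k) (B.comulR (B.proj c r))
  have key : ∀ f : Γ, ∑ i, B.antipodeR (B.proj f (r1 i)) * B.proj (f⁻¹ * c) (r2 i)
      = (LinearMap.mul' k R) ((TensorProduct.map B.antipodeR LinearMap.id)
          (TensorProduct.map (B.proj f) (B.proj (f⁻¹ * c)) (B.comulR r))) := by
    intro f
    rw [h, map_sum, map_sum, map_sum]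
    exact Finset.sum_congr rfl (fun i _ => by
      rw [TensorProduct.map_tmul, TensorProduct.map_tmul, LinearMap.mul'_apply]
      rfl)
  rw [Finset.sum_congr rfl (fun f _ => key f), ← map_sum, ← map_sum, comul_proj, hrepr,
    map_sum, map_sum]
  have : ∀ j, (LinearMap.mul' k R) ((TensorProduct.map B.antipodeR LinearMap.id)
      (ρ1 j ⊗ₜ[k] ρ2 j)) = B.antipodeR (ρ1 j) * ρ2 j := fun j => by
    rw [TensorProduct.map_tmul, LinearMap.mul'_apply]; rfl
  rw [Finset.sum_congr rfl (fun j _ => this j)]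
  exact B.antipodeR_left (B.proj c r) ρ1 ρ2 hrepr

lemma TT_left : LinearMap.mul' k A ∘ₗ (TT B).rTensor A ∘ₗ Coalgebra.comul (R := k)
    = Algebra.linearMap k A ∘ₗ Coalgebra.counit (R := k) := by
  apply LinearMap.ext_on (spanA B)
  rintro a ⟨r, δ, rfl⟩
  obtain ⟨n, r1, r2, hr⟩ := exists_isRepr (k := k) (B.comulR r)
  simp only [LinearMap.coe_comp, Function.comp_apply]
  rw [show Coalgebra.comul (R := k) (bE B r δ)
      = ∑ i, ∑ g : Γ, B.e (r1 i ⊗ₜ[k] MonoidAlgebra.single (g * δ) 1)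
          ⊗ₜ[k] B.e (B.proj g (r2 i) ⊗ₜ[k] MonoidAlgebra.single δ 1)
    from B.e_comul r δ r1 r2 hr]
  simp only [e_eq_bE, map_sum, LinearMap.rTensor_tmul, LinearMap.mul'_apply]
  have step1 : ∀ (i : Fin n) (g : Γ),
      TT B (bE B (r1 i) (g * δ)) * bE B (B.proj g (r2 i)) δ
        = ∑ f : Γ, bE B (B.act (δ⁻¹ * (f * g)⁻¹)
            (B.antipodeR (B.proj f (r1 i)) * B.proj g (r2 i)))
            (δ⁻¹ * (f * g)⁻¹ * δ) := by
    intro i g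
    rw [TT_bE, Finset.sum_mul]
    refine Finset.sum_congr rfl (fun f _ => ?_)
    rw [bE_mul, ← map_mul]
    have hq : (g * δ)⁻¹ * f⁻¹ = δ⁻¹ * (f * g)⁻¹ := by group
    rw [hq]
  rw [Finset.sum_congr rfl (fun i _ => Finset.sum_congr rfl (fun g _ => step1 i g))]
  have step2 : ∀ i : Fin n,
      (∑ g : Γ, ∑ f : Γ, bE B (B.act (δ⁻¹ * (f * g)⁻¹)
          (B.antipodeR (B.proj f (r1 i)) * B.proj g (r2 i))) (δ⁻¹ * (f * g)⁻¹ * δ))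
        = ∑ c : Γ, ∑ f : Γ, bE B (B.act (δ⁻¹ * c⁻¹)
            (B.antipodeR (B.proj f (r1 i)) * B.proj (f⁻¹ * c) (r2 i)))
            (δ⁻¹ * c⁻¹ * δ) := by
    intro i
    rw [Finset.sum_comm]
    have inner : ∀ f : Γ,
        (∑ g : Γ, bE B (B.act (δ⁻¹ * (f * g)⁻¹)
            (B.antipodeR (B.proj f (r1 i)) * B.proj g (r2 i))) (δ⁻¹ * (f * g)⁻¹ * δ))
          = ∑ c : Γ, bE B (B.act (δ⁻¹ * c⁻¹)
              (B.antipodeR (B.proj f (r1 i)) * B.proj (f⁻¹ * c) (r2 i)))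
              (δ⁻¹ * c⁻¹ * δ) := by
      intro f
      rw [← Equiv.sum_comp (Equiv.mulLeft f⁻¹)
        (fun g => bE B (B.act (δ⁻¹ * (f * g)⁻¹)
          (B.antipodeR (B.proj f (r1 i)) * B.proj g (r2 i))) (δ⁻¹ * (f * g)⁻¹ * δ))]
      refine Finset.sum_congr rfl (fun c _ => ?_)
      have h1 : (Equiv.mulLeft f⁻¹) c = f⁻¹ * c := rfl
      rw [h1, mul_inv_cancel_left]
    rw [Finset.sum_congr rfl (fun f _ => inner f), Finset.sum_comm]
  rw [Finset.sum_congr rfl (fun i _ => step2 i), Finset.sum_comm]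
  have step3 : ∀ c : Γ,
      (∑ i, ∑ f : Γ, bE B (B.act (δ⁻¹ * c⁻¹)
          (B.antipodeR (B.proj f (r1 i)) * B.proj (f⁻¹ * c) (r2 i)))
          (δ⁻¹ * c⁻¹ * δ))
        = B.counitR (B.proj c r) • bE B 1 (δ⁻¹ * c⁻¹ * δ) := by
    intro c
    rw [Finset.sum_comm]
    have h1 : ∀ f : Γ, (∑ i, bE B (B.act (δ⁻¹ * c⁻¹)
        (B.antipodeR (B.proj f (r1 i)) * B.proj (f⁻¹ * c) (r2 i))) (δ⁻¹ * c⁻¹ * δ))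
        = bE B (B.act (δ⁻¹ * c⁻¹) (∑ i, B.antipodeR (B.proj f (r1 i))
            * B.proj (f⁻¹ * c) (r2 i))) (δ⁻¹ * c⁻¹ * δ) := by
      intro f
      rw [map_sum, bE_sum]
    rw [Finset.sum_congr rfl (fun f _ => h1 f)]
    have h2 : (∑ f : Γ, bE B (B.act (δ⁻¹ * c⁻¹) (∑ i, B.antipodeR (B.proj f (r1 i))
        * B.proj (f⁻¹ * c) (r2 i))) (δ⁻¹ * c⁻¹ * δ))
        = bE B (B.act (δ⁻¹ * c⁻¹) (∑ f : Γ, ∑ i, B.antipodeR (B.proj f (r1 i))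
            * B.proj (f⁻¹ * c) (r2 i))) (δ⁻¹ * c⁻¹ * δ) := by
      rw [map_sum, bE_sum]
    rw [h2, Wc_eq B c r r1 r2 hr, map_smul, map_one, bE_smul]
  rw [Finset.sum_congr rfl (fun c _ => step3 c)]
  rw [Finset.sum_eq_single 1]
  · rw [counitR_proj_one]
    have h1 : δ⁻¹ * (1 : Γ)⁻¹ * δ = 1 := by group
    rw [h1, bE_one]
    rw [show Coalgebra.counit (R := k) (bE B r δ) = B.counitR r from B.e_counit r δ,
      Algebra.linearMap_apply, Algebra.algebraMap_eq_smul_one]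
  · intro c _ hc
    rw [B.counitR_graded c r hc, zero_smul]
  · intro h; exact absurd (Finset.mem_univ _) h

end
end Aux7
section Aux8
open scoped TensorProduct
open TensorProduct MulOpposite

variable {k Γ R A : Type} [Field k] [Group Γ] [Fintype Γ] [DecidableEq Γ]
  [Ring R] [Algebra k R] [Ring A] [HopfAlgebra k A] (B : GammaBosonization k Γ R A)

noncomputable section

lemma TT_repr {ι : Type} (x : A) (re : Coalgebra.Repr k x ι) :
    ∑ j ∈ re.index, TT B (re.left j) * re.right j
      = algebraMap k A (Coalgebra.counit (R := k) x) := by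
  have h := LinearMap.congr_fun (TT_left B) x
  simp only [LinearMap.coe_comp, Function.comp_apply, Algebra.linearMap_apply] at h
  rw [← re.eq] at h
  simpa [map_sum, LinearMap.rTensor_tmul, LinearMap.mul'_apply] using h

lemma TT_eq_antipode : TT B = HopfAlgebra.antipode (R := k) (A := A) := by
  apply LinearMap.ext
  intro a
  let rp := Coalgebra.Repr.arbitrary k a
  have stepA : ∑ i ∈ rp.index,
      Coalgebra.counit (R := k) (rp.right i) • TT B (rp.left i) = TT B a := by
    have h := Coalgebra.sum_tmul_counit_eq (R := k) rp
    have h2 := congrArg ((TensorProduct.rid k A).toLinearMap ∘ₗ (TT B).rTensor k) h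
    rw [map_sum] at h2
    have hphi : ∀ (x : A) (c : k),
        ((TensorProduct.rid k A).toLinearMap ∘ₗ (TT B).rTensor k) (x ⊗ₜ[k] c)
          = c • TT B x := fun x c => by
      simp [LinearMap.rTensor_tmul, TensorProduct.rid_tmul]
    rw [Finset.sum_congr rfl (fun i _ => hphi _ _), hphi, one_smul] at h2
    exact h2
  have stepB : ∑ i ∈ rp.index, Coalgebra.counit (R := k) (rp.left i) •
      HopfAlgebra.antipode (R := k) (rp.right i)
      = HopfAlgebra.antipode (R := k) a := by
    have h := Coalgebra.sum_counit_tmul_eq (R := k) rp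
    have h2 := congrArg ((TensorProduct.lid k A).toLinearMap ∘ₗ
      (HopfAlgebra.antipode (R := k)).lTensor k) h
    rw [map_sum] at h2
    have hphi : ∀ (c : k) (x : A),
        ((TensorProduct.lid k A).toLinearMap ∘ₗ
          (HopfAlgebra.antipode (R := k)).lTensor k) (c ⊗ₜ[k] x)
          = c • HopfAlgebra.antipode (R := k) x := fun c x => by
      simp [LinearMap.lTensor_tmul, TensorProduct.lid_tmul]
    rw [Finset.sum_congr rfl (fun i _ => hphi _ _), hphi, one_smul] at h2
    exact h2
  have main := Coalgebra.sum_tmul_tmul_eq (R := k) rp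
    (fun i => Coalgebra.Repr.arbitrary k (rp.left i))
    (fun i => Coalgebra.Repr.arbitrary k (rp.right i))
  have hmain := congrArg (LinearMap.mul' k A ∘ₗ
    (LinearMap.mul' k A).lTensor A ∘ₗ
    TensorProduct.map (TT B) (TensorProduct.map LinearMap.id
      (HopfAlgebra.antipode (R := k)))) main
  simp only [map_sum, LinearMap.coe_comp, Function.comp_apply, TensorProduct.map_tmul,
    LinearMap.lTensor_tmul, LinearMap.mul'_apply, LinearMap.id_coe, id_eq] at hmain
  -- LHS of hmain : ∑ i ∑ j, TT(left₁) * (right₁ * S(right i))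
  -- RHS of hmain : ∑ i ∑ j, TT(left i) * (left₂ * S(right₂))
  have hL : ∀ i ∈ rp.index,
      (∑ j ∈ (Coalgebra.Repr.arbitrary k (rp.left i)).index,
        TT B ((Coalgebra.Repr.arbitrary k (rp.left i)).left j) *
          ((Coalgebra.Repr.arbitrary k (rp.left i)).right j *
            HopfAlgebra.antipode (R := k) (rp.right i)))
        = Coalgebra.counit (R := k) (rp.left i) •
            HopfAlgebra.antipode (R := k) (rp.right i) := by
    intro i _
    have : ∀ j ∈ (Coalgebra.Repr.arbitrary k (rp.left i)).index,
        TT B ((Coalgebra.Repr.arbitrary k (rp.left i)).left j) *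
          ((Coalgebra.Repr.arbitrary k (rp.left i)).right j *
            HopfAlgebra.antipode (R := k) (rp.right i))
          = (TT B ((Coalgebra.Repr.arbitrary k (rp.left i)).left j) *
              (Coalgebra.Repr.arbitrary k (rp.left i)).right j) *
              HopfAlgebra.antipode (R := k) (rp.right i) := by
      intro j _
      rw [mul_assoc]
    rw [Finset.sum_congr rfl this, ← Finset.sum_mul,
      TT_repr B (rp.left i) (Coalgebra.Repr.arbitrary k (rp.left i)),
      ← Algebra.smul_def]
  have hR : ∀ i ∈ rp.index,
      (∑ j ∈ (Coalgebra.Repr.arbitrary k (rp.right i)).index,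
        TT B (rp.left i) * ((Coalgebra.Repr.arbitrary k (rp.right i)).left j *
          HopfAlgebra.antipode (R := k)
            ((Coalgebra.Repr.arbitrary k (rp.right i)).right j)))
        = Coalgebra.counit (R := k) (rp.right i) • TT B (rp.left i) := by
    intro i _
    rw [← Finset.mul_sum, HopfAlgebra.sum_mul_antipode_eq_algebraMap_counit
      (Coalgebra.Repr.arbitrary k (rp.right i)), ← Algebra.commutes, ← Algebra.smul_def]
  rw [Finset.sum_congr rfl hL, Finset.sum_congr rfl hR, stepA, stepB] at hmain
  exact hmain.symm

end
end Aux8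
section Aux9
open scoped TensorProduct
open TensorProduct MulOpposite

variable {k Γ R A : Type} [Field k] [Group Γ] [Fintype Γ] [DecidableEq Γ]
  [Ring R] [Algebra k R] [Ring A] [HopfAlgebra k A] (B : GammaBosonization k Γ R A)

noncomputable section

lemma bE_zero (γ : Γ) : bE B 0 γ = 0 := by
  rw [bE, TensorProduct.zero_tmul, map_zero]

lemma antipode_bE_proj (s : R) (g δ : Γ) :
    HopfAlgebra.antipode (R := k) (bE B (B.proj g s) δ)
      = bE B (B.act (δ⁻¹ * g⁻¹) (B.antipodeR (B.proj g s))) (δ⁻¹ * g⁻¹) := by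
  rw [← TT_eq_antipode B, TT_bE, Finset.sum_eq_single g]
  · rw [proj_proj_self]
  · intro f _ hf
    rw [B.proj_proj f g s, if_neg hf, map_zero, map_zero, bE_zero]
  · intro h; exact absurd (Finset.mem_univ _) h

lemma rho_mem (a : A) : hopfRho k A a ∈ Submodule.span k (setNF B) := by
  have ha : a ∈ Submodule.span k (setA B) := by rw [spanA]; trivial
  induction ha using Submodule.span_induction with
  | mem x hx =>
      obtain ⟨r, δ, rfl⟩ := hx
      obtain ⟨n, r1, r2, hr⟩ := exists_isRepr (k := k) (B.comulR r)
      rw [hopfRho]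
      simp only [LinearMap.coe_comp, Function.comp_apply]
      rw [show Coalgebra.comul (R := k) (bE B r δ)
          = ∑ i, ∑ g : Γ, B.e (r1 i ⊗ₜ[k] MonoidAlgebra.single (g * δ) 1)
              ⊗ₜ[k] B.e (B.proj g (r2 i) ⊗ₜ[k] MonoidAlgebra.single δ 1)
        from B.e_comul r δ r1 r2 hr]
      simp only [e_eq_bE, map_sum, TensorProduct.map_tmul, LinearMap.id_coe, id_eq,
        LinearMap.coe_comp, Function.comp_apply, LinearEquiv.coe_coe]
      refine Submodule.sum_mem _ (fun i _ => Submodule.sum_mem _ (fun g _ => ?_))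
      rw [antipode_bE_proj]
      have hq : δ⁻¹ * g⁻¹ = (g * δ)⁻¹ := by group
      rw [hq]
      have hmm : MulOpposite.opLinearEquiv k
          (bE B (B.act (g * δ)⁻¹ (B.antipodeR (B.proj g (r2 i)))) (g * δ)⁻¹)
          = op (bE B (B.act (g * δ)⁻¹ (B.antipodeR (B.proj g (r2 i)))) (g * δ)⁻¹) := rfl
      rw [hmm, ← embA_tmul_mul_uD]
      exact Submodule.subset_span ⟨_, _, rfl⟩
  | zero => rw [map_zero]; exact Submodule.zero_mem _
  | add u v _ _ hu hv => rw [map_add]; exact Submodule.add_mem _ hu hv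
  | smul c u _ hu => rw [map_smul]; exact Submodule.smul_mem _ _ hu

end
end Aux9
section Aux10
open scoped TensorProduct
open TensorProduct MulOpposite

variable {k Γ R A : Type} [Field k] [Group Γ] [Fintype Γ] [DecidableEq Γ]
  [Ring R] [Algebra k R] [Ring A] [HopfAlgebra k A] (B : GammaBosonization k Γ R A)

noncomputable section

/-- the map `Θ`. -/
def ThetaMap (x : A ⊗[k] Aᵐᵒᵖ) : ↥(DSub k Γ R A B) →ₗ[k] R ⊗[k] Rᵐᵒᵖ where
  toFun := fun y => ∑ p : Γ, coD B p (y : A ⊗[k] Aᵐᵒᵖ) * alE B p (coD B p⁻¹ x)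
  map_add' := fun y z => by
    simp only [AddMemClass.coe_add, map_add, add_mul]
    rw [Finset.sum_add_distrib]
  map_smul' := fun c y => by
    simp only [SetLike.val_smul, map_smul, smul_mul_assoc, RingHom.id_apply]
    rw [← Finset.smul_sum]

lemma ThetaMap_apply (x : A ⊗[k] Aᵐᵒᵖ) (y : ↥(DSub k Γ R A B)) :
    ThetaMap B x y
      = ∑ p : Γ, coD B p (y : A ⊗[k] Aᵐᵒᵖ) * alE B p (coD B p⁻¹ x) := rfl

lemma coD_uD (p g : Γ) : coD B p (uD B g) = if p = g then 1 else 0 := by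
  rw [show uD B g = embA B 1 * uD B g by rw [map_one, one_mul], coD_normal]

lemma ThetaMap_uD (x : A ⊗[k] Aᵐᵒᵖ) (g : Γ) (hg : uD B g ∈ DSub k Γ R A B) :
    ThetaMap B x ⟨uD B g, hg⟩ = alE B g (coD B g⁻¹ x) := by
  rw [ThetaMap_apply]
  have h : ∀ p : Γ, coD B p (uD B g) * alE B p (coD B p⁻¹ x)
      = if p = g then alE B g (coD B g⁻¹ x) else 0 := by
    intro p
    rw [coD_uD]
    split_ifs with h
    · rw [h, one_mul]
    · rw [zero_mul]
  rw [Finset.sum_congr rfl (fun p _ => h p), Finset.sum_ite_eq' Finset.univ g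
    (fun _ => alE B g (coD B g⁻¹ x))]
  simp

end
end Aux10

open scoped TensorProduct in
/-- **Statement 12** (Lemma `lem fgp`).
For `A = R # kΓ` and `𝒟 ⊆ A^e` the subalgebra generated by the `(r#g) ⊗ (s#g⁻¹)`, one has
`Hom_{R^e}(𝒟, R^e) ≅ 𝒟` as `A`-`R^e`-bimodules: there is a `k`-linear bijection `Θ` from
`𝒟` onto the space of left `R^e`-linear maps `𝒟 → R^e` which intertwines the left
`A`-module structures (`ρ(a)⋅` on `𝒟`; `(a ⋅ F)(y) = F(y ⋅ ρ(a))` on the Hom-space,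
induced from the right `A`-module structure of `𝒟`) and the right `R^e`-module structures
(right multiplication through `R^e → A^e` on `𝒟`; `(F ⋅ z)(y) = F(y) z` on the
Hom-space). -/
theorem statement12 (k Γ R A : Type) [Field k] [CharZero k] [IsAlgClosed k]
    [Group Γ] [Fintype Γ] [DecidableEq Γ] [Ring R] [Algebra k R]
    [Ring A] [HopfAlgebra k A] (B : GammaBosonization k Γ R A) :
    ∃ Θ : ↥(DSub k Γ R A B) → (↥(DSub k Γ R A B) →ₗ[k] (R ⊗[k] Rᵐᵒᵖ)),
      -- `Θ` is `k`-linear: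
      (∀ x y, Θ (x + y) = Θ x + Θ y) ∧ (∀ (c : k) (x), Θ (c • x) = c • Θ x) ∧
      -- `Θ` is a bijection onto `Hom_{R^e}(𝒟, R^e)`:
      Function.Injective Θ ∧
      (∀ x, IsReLinear k Γ R A B (Θ x)) ∧
      (∀ F : ↥(DSub k Γ R A B) →ₗ[k] (R ⊗[k] Rᵐᵒᵖ),
        IsReLinear k Γ R A B F → ∃ x, Θ x = F) ∧
      -- `Θ` is left `A`-linear, where `a` acts on `𝒟` by left multiplication by `ρ(a)`
      -- and on `Hom_{R^e}(𝒟, R^e)` by `(a ⋅ F)(y) = F(y ⋅ ρ(a))`: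
      (∀ (a : A) (x z : ↥(DSub k Γ R A B)),
        (z : A ⊗[k] Aᵐᵒᵖ) = hopfRho k A a * (x : A ⊗[k] Aᵐᵒᵖ) →
          ∀ (w w' : ↥(DSub k Γ R A B)),
            (w' : A ⊗[k] Aᵐᵒᵖ) = (w : A ⊗[k] Aᵐᵒᵖ) * hopfRho k A a →
              Θ z w = Θ x w') ∧
      -- `Θ` is right `R^e`-linear:
      (∀ (z : R ⊗[k] Rᵐᵒᵖ) (x y : ↥(DSub k Γ R A B)),
        (y : A ⊗[k] Aᵐᵒᵖ) = (x : A ⊗[k] Aᵐᵒᵖ) * embRe k Γ R A B z →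
          ∀ w, Θ y w = Θ x w * z) := by
  classical
  refine ⟨fun x => ThetaMap B (x : A ⊗[k] Aᵐᵒᵖ), ?_, ?_, ?_, ?_, ?_, ?_, ?_⟩
  · -- additivity
    intro x y
    apply LinearMap.ext
    intro w
    rw [LinearMap.add_apply, ThetaMap_apply, ThetaMap_apply, ThetaMap_apply,
      ← Finset.sum_add_distrib]
    refine Finset.sum_congr rfl (fun p _ => ?_)
    rw [AddMemClass.coe_add, map_add, map_add, mul_add]
  · -- homogeneity
    intro c x
    apply LinearMap.ext
    intro w
    rw [LinearMap.smul_apply, ThetaMap_apply, ThetaMap_apply, Finset.smul_sum]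
    refine Finset.sum_congr rfl (fun p _ => ?_)
    rw [SetLike.val_smul, map_smul, map_smul, mul_smul_comm]
  · -- injectivity
    intro x y hxy
    have hco : ∀ γ : Γ, coD B γ (x : A ⊗[k] Aᵐᵒᵖ) = coD B γ (y : A ⊗[k] Aᵐᵒᵖ) := by
      intro γ
      have h := congrArg (fun F => F ⟨uD B γ⁻¹, uD_mem_DSub B γ⁻¹⟩) hxy
      simp only at h
      rw [ThetaMap_uD, ThetaMap_uD, inv_inv] at h
      exact (alE B γ⁻¹).injective h
    apply Subtype.ext
    rw [← recon B (DSub_le_spanNF B x.2), ← recon B (DSub_le_spanNF B y.2)]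
    exact Finset.sum_congr rfl (fun γ _ => by rw [hco γ])
  · -- left R^e-linearity of each Θ x
    intro x z x' y' hy'
    rw [ThetaMap_apply, ThetaMap_apply, hy', embRe_eq_embA, Finset.mul_sum]
    refine Finset.sum_congr rfl (fun p _ => ?_)
    rw [coD_mulLeft_embA, mul_assoc]
  · -- surjectivity
    intro F hF
    set x0 : A ⊗[k] Aᵐᵒᵖ :=
      ∑ g : Γ, embA B (alE B g (F ⟨uD B g⁻¹, uD_mem_DSub B g⁻¹⟩)) * uD B g with hx0def
    have hx0 : x0 ∈ DSub k Γ R A B :=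
      Subalgebra.sum_mem _ (fun g _ => Subalgebra.mul_mem _ (embA_mem_DSub B _)
        (uD_mem_DSub B g))
    refine ⟨⟨x0, hx0⟩, ?_⟩
    apply LinearMap.ext
    intro y
    have hcoord : ∀ q : Γ, coD B q x0
        = alE B q (F ⟨uD B q⁻¹, uD_mem_DSub B q⁻¹⟩) := by
      intro q
      rw [hx0def, map_sum]
      have h : ∀ g : Γ,
          coD B q (embA B (alE B g (F ⟨uD B g⁻¹, uD_mem_DSub B g⁻¹⟩)) * uD B g)
            = if q = g then alE B g (F ⟨uD B g⁻¹, uD_mem_DSub B g⁻¹⟩) else 0 :=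
        fun g => coD_normal B q g _
      rw [Finset.sum_congr rfl (fun g _ => h g), Finset.sum_ite_eq Finset.univ q
        (fun g => alE B g (F ⟨uD B g⁻¹, uD_mem_DSub B g⁻¹⟩))]
      simp
    rw [ThetaMap_apply]
    have hterm : ∀ p : Γ,
        coD B p (y : A ⊗[k] Aᵐᵒᵖ) * alE B p (coD B p⁻¹ x0)
          = coD B p (y : A ⊗[k] Aᵐᵒᵖ) * F ⟨uD B p, uD_mem_DSub B p⟩ := by
      intro p
      rw [hcoord p⁻¹, inv_inv, alE_alE, mul_inv_cancel, alE_one]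
    rw [Finset.sum_congr rfl (fun p _ => hterm p)]
    have hy : (y : A ⊗[k] Aᵐᵒᵖ)
        = ∑ p : Γ, embA B (coD B p (y : A ⊗[k] Aᵐᵒᵖ)) * uD B p :=
      (recon B (DSub_le_spanNF B y.2)).symm
    have hYmem : ∀ p : Γ,
        embA B (coD B p (y : A ⊗[k] Aᵐᵒᵖ)) * uD B p ∈ DSub k Γ R A B :=
      fun p => Subalgebra.mul_mem _ (embA_mem_DSub B _) (uD_mem_DSub B p)
    have hysub : y = ∑ p : Γ,
        (⟨embA B (coD B p (y : A ⊗[k] Aᵐᵒᵖ)) * uD B p, hYmem p⟩ :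
          ↥(DSub k Γ R A B)) := by
      apply Subtype.ext
      rw [AddSubmonoidClass.coe_finset_sum]
      exact hy
    conv_rhs => rw [hysub]
    rw [map_sum]
    refine Finset.sum_congr rfl (fun p _ => ?_)
    exact (hF (coD B p (y : A ⊗[k] Aᵐᵒᵖ)) ⟨uD B p, uD_mem_DSub B p⟩ ⟨_, hYmem p⟩
      (by rw [embRe_eq_embA])).symm
  · -- left A-linearity
    intro a x z hz w w' hw'
    rw [ThetaMap_apply, ThetaMap_apply, hz, hw']
    have hdm : hopfRho k A a ∈ Submodule.span k (setNF B) := rho_mem B a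
    have hL : ∀ p : Γ,
        coD B p (w : A ⊗[k] Aᵐᵒᵖ) * alE B p (coD B p⁻¹ (hopfRho k A a * (x : A ⊗[k] Aᵐᵒᵖ)))
          = ∑ f : Γ, coD B p (w : A ⊗[k] Aᵐᵒᵖ) *
              (alE B p (coD B f (hopfRho k A a)) *
                alE B (p * f) (coD B (f⁻¹ * p⁻¹) (x : A ⊗[k] Aᵐᵒᵖ))) := by
      intro p
      rw [coD_mul_left B hdm, map_sum, Finset.mul_sum]
      refine Finset.sum_congr rfl (fun f _ => ?_)
      rw [map_mul, alE_alE]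
    have hR : ∀ p : Γ,
        coD B p ((w : A ⊗[k] Aᵐᵒᵖ) * hopfRho k A a) * alE B p (coD B p⁻¹ (x : A ⊗[k] Aᵐᵒᵖ))
          = ∑ f : Γ, coD B (p * f⁻¹) (w : A ⊗[k] Aᵐᵒᵖ) *
              alE B (p * f⁻¹) (coD B f (hopfRho k A a)) *
              alE B p (coD B p⁻¹ (x : A ⊗[k] Aᵐᵒᵖ)) := by
      intro p
      rw [coD_mul_right B hdm, Finset.sum_mul]
    rw [Finset.sum_congr rfl (fun p _ => hL p), Finset.sum_congr rfl (fun p _ => hR p),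
      Finset.sum_comm]
    conv_rhs => rw [Finset.sum_comm]
    refine Finset.sum_congr rfl (fun f _ => ?_)
    rw [← Equiv.sum_comp (Equiv.mulRight f)
      (fun p => coD B (p * f⁻¹) (w : A ⊗[k] Aᵐᵒᵖ) *
        alE B (p * f⁻¹) (coD B f (hopfRho k A a)) *
        alE B p (coD B p⁻¹ (x : A ⊗[k] Aᵐᵒᵖ)))]
    refine Finset.sum_congr rfl (fun p _ => ?_)
    have h1 : (Equiv.mulRight f) p = p * f := rfl
    rw [h1, mul_inv_cancel_right, mul_inv_rev, mul_assoc]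
  · -- right R^e-linearity of Θ
    intro z x y hy w
    rw [ThetaMap_apply, ThetaMap_apply, hy, embRe_eq_embA, Finset.sum_mul]
    refine Finset.sum_congr rfl (fun p _ => ?_)
    rw [coD_mulRight_embA, map_mul, alE_alE, mul_inv_cancel, alE_one, ← mul_assoc]
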